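/- For every σ ∈ (0,1) there exists a ∈ (0,1) such that I(a) = σ and W(a) < 4π/σ. (This is the analytic content of the bound β₀(σ) < 4π/σ for the minimal Willmore energy of spheres with isoperimetric ratio σ, witnessed by a prolate spheroid with semi-axes (a, a, 1).) -/

import Mathlib

open Real

/-- `s a = arcsin (√(1 - a²)) / √(1 - a²)`. -/
noncomputable def sAux (a : ℝ) : ℝ := arcsin (Real.sqrt (1 - a ^ 2)) / Real.sqrt (1 - a ^ 2)

/-- Isoperimetric ratio of the prolate spheroid with semi-axes `(a, a, 1)`. -/
noncomputable def isoRatio (a : ℝ) : ℝ := 8 * a / (a + sAux a) ^ 3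

/-- Willmore energy of the prolate spheroid with semi-axes `(a, a, 1)`. -/
noncomputable def willmoreEnergy (a : ℝ) : ℝ :=
  7 * π / 3 + (2 * π / 3) * a ^ 2 + (π / a) * sAux a

open Set Filter Topology

/-- Shafer-type inequality: `3x/(2+√(1-x²)) ≤ arcsin x` on `[0,1)`. -/
lemma shafer_arcsin {x : ℝ} (hx0 : 0 ≤ x) (hx1 : x < 1) :
    3 * x / (2 + Real.sqrt (1 - x ^ 2)) ≤ arcsin x := by
  set f : ℝ → ℝ := fun y => arcsin y - 3 * y / (2 + Real.sqrt (1 - y ^ 2)) with hf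
  have hsq : Continuous (fun y : ℝ => Real.sqrt (1 - y ^ 2)) :=
    (continuous_const.sub (continuous_pow 2)).sqrt
  have hden : ∀ y : ℝ, (0:ℝ) < 2 + Real.sqrt (1 - y ^ 2) := fun y => by
    have := Real.sqrt_nonneg (1 - y ^ 2); linarith
  have hcont : ContinuousOn f (Ico (0:ℝ) 1) :=
    (Real.continuous_arcsin.continuousOn).sub
      (((continuous_const.mul continuous_id).continuousOn).div
        ((continuous_const.add hsq).continuousOn) (fun y _ => (hden y).ne'))
  have hderiv : ∀ y ∈ Ioo (0:ℝ) 1, ∃ d : ℝ, HasDerivAt f d y ∧ 0 ≤ d := by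
    intro y hy
    have h1 : (0:ℝ) < 1 - y ^ 2 := by nlinarith [hy.1, hy.2]
    set c := Real.sqrt (1 - y ^ 2) with hc
    have hcpos : 0 < c := Real.sqrt_pos.2 h1
    have hc2 : c ^ 2 = 1 - y ^ 2 := Real.sq_sqrt h1.le
    have hC : HasDerivAt (fun z : ℝ => Real.sqrt (1 - z ^ 2)) (-(2 * y ^ 1) / (2 * c)) y := by
      have h2 : HasDerivAt (fun z : ℝ => 1 - z ^ 2) (-(2 * y ^ 1)) y := by
        simpa using (hasDerivAt_pow 2 y).const_sub 1
      exact h2.sqrt h1.ne'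
    have hnum : HasDerivAt (fun z : ℝ => 3 * z) 3 y := by
      simpa using (hasDerivAt_id y).const_mul (3:ℝ)
    have hr : HasDerivAt (fun z : ℝ => 3 * z / (2 + Real.sqrt (1 - z ^ 2)))
        ((3 * (2 + c) - 3 * y * (-(2 * y ^ 1) / (2 * c))) / (2 + c) ^ 2) y :=
      hnum.div (hC.const_add 2) (hden y).ne'
    have ha : HasDerivAt arcsin (1 / Real.sqrt (1 - y ^ 2)) y :=
      Real.hasDerivAt_arcsin (show y ≠ -1 by intro h; rw [h] at hy; linarith [hy.1]) hy.2.ne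
    refine ⟨_, ha.sub hr, ?_⟩
    rw [sub_nonneg, ← hc]
    rw [div_le_div_iff₀ (by positivity) hcpos]
    have e1 : (3 * (2 + c) - 3 * y * (-(2 * y ^ 1) / (2 * c))) * c
        = 3 * (2 + c) * c + 3 * y ^ 2 := by field_simp; ring
    rw [e1]
    nlinarith [sq_nonneg (1 - c)]
  have hmono : MonotoneOn f (Ico (0:ℝ) 1) := by
    apply monotoneOn_of_deriv_nonneg (convex_Ico 0 1) hcont
    · intro y hy
      rw [interior_Ico] at hy
      obtain ⟨d, hd, _⟩ := hderiv y hy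
      exact hd.differentiableAt.differentiableWithinAt
    · intro y hy
      rw [interior_Ico] at hy
      obtain ⟨d, hd, hd0⟩ := hderiv y hy
      rw [hd.deriv]; exact hd0
  have h0 : f 0 = 0 := by simp [hf]
  have := hmono (show (0:ℝ) ∈ Ico (0:ℝ) 1 by constructor <;> norm_num)
    (show x ∈ Ico (0:ℝ) 1 from ⟨hx0, hx1⟩) hx0
  rw [h0] at this
  simpa [hf, sub_nonneg] using this

/-- Padé-type inequality: `x(2520-1080x²-61x⁴)/(2520-1500x²) ≤ arcsin x` on `[0,1)`. -/
lemma pade_arcsin {x : ℝ} (hx0 : 0 ≤ x) (hx1 : x < 1) :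
    (2520 * x - 1080 * x ^ 3 - 61 * x ^ 5) / (2520 - 1500 * x ^ 2) ≤ arcsin x := by
  set f : ℝ → ℝ := fun y =>
    arcsin y - (2520 * y - 1080 * y ^ 3 - 61 * y ^ 5) / (2520 - 1500 * y ^ 2) with hf
  have hden : ∀ y : ℝ, y ^ 2 ≤ 1 → (0:ℝ) < 2520 - 1500 * y ^ 2 := fun y h => by nlinarith
  have hcont : ContinuousOn f (Ico (0:ℝ) 1) := by
    apply (Real.continuous_arcsin.continuousOn).sub
    apply ContinuousOn.div (by fun_prop) (by fun_prop)
    intro y hy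
    exact (hden y (by nlinarith [hy.1, hy.2])).ne'
  have hderiv : ∀ y ∈ Ioo (0:ℝ) 1, ∃ d : ℝ, HasDerivAt f d y ∧ 0 ≤ d := by
    intro y hy
    have h1 : (0:ℝ) < 1 - y ^ 2 := by nlinarith [hy.1, hy.2]
    have hd2 : (0:ℝ) < 2520 - 1500 * y ^ 2 := hden y (by nlinarith)
    set c := Real.sqrt (1 - y ^ 2) with hc
    have hcpos : 0 < c := Real.sqrt_pos.2 h1
    have hc2 : c ^ 2 = 1 - y ^ 2 := Real.sq_sqrt h1.le
    have hnum : HasDerivAt (fun z : ℝ => 2520 * z - 1080 * z ^ 3 - 61 * z ^ 5)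
        (2520 - 1080 * (3 * y ^ 2) - 61 * (5 * y ^ 4)) y := by
      have h1' := (hasDerivAt_id y).const_mul (2520:ℝ)
      have h3 := (hasDerivAt_pow 3 y).const_mul (1080:ℝ)
      have h5 := (hasDerivAt_pow 5 y).const_mul (61:ℝ)
      refine HasDerivAt.congr_deriv ((h1'.sub h3).sub h5) ?_
      push_cast; ring
    have hdenD : HasDerivAt (fun z : ℝ => 2520 - 1500 * z ^ 2) (-(1500 * (2 * y))) y := by
      have h2 := (hasDerivAt_pow 2 y).const_mul (1500:ℝ)
      simpa using ((h2).const_sub 2520)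
    have hr : HasDerivAt (fun z : ℝ =>
        (2520 * z - 1080 * z ^ 3 - 61 * z ^ 5) / (2520 - 1500 * z ^ 2))
        (((2520 - 1080 * (3 * y ^ 2) - 61 * (5 * y ^ 4)) * (2520 - 1500 * y ^ 2)
          - (2520 * y - 1080 * y ^ 3 - 61 * y ^ 5) * (-(1500 * (2 * y))))
          / (2520 - 1500 * y ^ 2) ^ 2) y := hnum.div hdenD hd2.ne'
    have ha : HasDerivAt arcsin (1 / Real.sqrt (1 - y ^ 2)) y :=
      Real.hasDerivAt_arcsin (show y ≠ -1 by intro h; rw [h] at hy; linarith [hy.1]) hy.2.ne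
    refine ⟨_, ha.sub hr, ?_⟩
    rw [sub_nonneg, ← hc]
    set G : ℝ := 6350400 - 4384800 * y ^ 2 + 851400 * y ^ 4 + 274500 * y ^ 6 with hG
    have eG : (2520 - 1080 * (3 * y ^ 2) - 61 * (5 * y ^ 4)) * (2520 - 1500 * y ^ 2)
          - (2520 * y - 1080 * y ^ 3 - 61 * y ^ 5) * (-(1500 * (2 * y))) = G := by
      rw [hG]; ring
    rw [eG, div_le_div_iff₀ (by positivity) hcpos]
    -- goal : G * c ≤ 1 * (2520 - 1500*y^2)^2
    have hy2 : y ^ 2 ≤ 1 := by nlinarith [hy.1, hy.2]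
    have hGpos : 0 < G := by
      rw [hG]; nlinarith [hy2, sq_nonneg (y ^ 2), pow_nonneg (sq_nonneg y) 3,
        sq_nonneg (y ^ 3)]
    have hE : (2520 - 1500 * y ^ 2) ^ 4 - (1 - y ^ 2) * G ^ 2
        = 810000 * y ^ 8 * (3413340 - 2654064 * y ^ 2 + 484035 * y ^ 4 + 93025 * y ^ 6) := by
      rw [hG]; ring
    have hE0 : (1 - y ^ 2) * G ^ 2 ≤ (2520 - 1500 * y ^ 2) ^ 4 := by
      have h8 : (0:ℝ) ≤ y ^ 8 := by positivity
      have hq : (0:ℝ) ≤ 3413340 - 2654064 * y ^ 2 + 484035 * y ^ 4 + 93025 * y ^ 6 := by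
        nlinarith [hy2, sq_nonneg (y ^ 2), pow_nonneg (sq_nonneg y) 3]
      nlinarith [hE, mul_nonneg h8 hq]
    -- from (cG)² = (1-y²)G² ≤ d⁴ = (d²)², both nonneg, conclude cG ≤ d²
    have hcG : (G * c) ^ 2 ≤ ((2520 - 1500 * y ^ 2) ^ 2) ^ 2 := by
      have : (G * c) ^ 2 = (1 - y ^ 2) * G ^ 2 := by rw [mul_pow, hc2]; ring
      rw [this]; calc (1 - y^2) * G^2 ≤ (2520 - 1500*y^2)^4 := hE0
        _ = ((2520 - 1500 * y ^ 2) ^ 2) ^ 2 := by ring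
    nlinarith [hcG, hd2, mul_pos hd2 hd2, mul_pos hGpos hcpos,
      sq_nonneg (G * c - (2520 - 1500 * y ^ 2) ^ 2)]
  have hmono : MonotoneOn f (Ico (0:ℝ) 1) := by
    apply monotoneOn_of_deriv_nonneg (convex_Ico 0 1) hcont
    · intro y hy
      rw [interior_Ico] at hy
      obtain ⟨d, hd, _⟩ := hderiv y hy
      exact hd.differentiableAt.differentiableWithinAt
    · intro y hy
      rw [interior_Ico] at hy
      obtain ⟨d, hd, hd0⟩ := hderiv y hy
      rw [hd.deriv]; exact hd0
  have h0 : f 0 = 0 := by simp [hf]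
  have := hmono (show (0:ℝ) ∈ Ico (0:ℝ) 1 by constructor <;> norm_num)
    (show x ∈ Ico (0:ℝ) 1 from ⟨hx0, hx1⟩) hx0
  rw [h0] at this
  simpa [hf, sub_nonneg] using this

section basic
variable {a : ℝ} (ha : a ∈ Ioo (0:ℝ) 1)

lemma b_facts (ha : a ∈ Ioo (0:ℝ) 1) :
    0 < Real.sqrt (1 - a ^ 2) ∧ Real.sqrt (1 - a ^ 2) < 1 ∧
    Real.sqrt (1 - (Real.sqrt (1 - a ^ 2)) ^ 2) = a ∧ (Real.sqrt (1 - a ^ 2)) ^ 2 = 1 - a ^ 2 := by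
  obtain ⟨ha0, ha1⟩ := ha
  have h1 : (0:ℝ) < 1 - a ^ 2 := by nlinarith
  have hb0 : 0 < Real.sqrt (1 - a ^ 2) := Real.sqrt_pos.2 h1
  have hb2 : (Real.sqrt (1 - a ^ 2)) ^ 2 = 1 - a ^ 2 := Real.sq_sqrt h1.le
  have hb1 : Real.sqrt (1 - a ^ 2) < 1 := by
    nlinarith [hb2, hb0]
  have hba : Real.sqrt (1 - (Real.sqrt (1 - a ^ 2)) ^ 2) = a := by
    rw [hb2]; rw [show 1 - (1 - a ^ 2) = a ^ 2 by ring]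
    exact Real.sqrt_sq ha0.le
  exact ⟨hb0, hb1, hba, hb2⟩

lemma sAux_lb_shafer (ha : a ∈ Ioo (0:ℝ) 1) : 3 / (2 + a) ≤ sAux a := by
  obtain ⟨hb0, hb1, hba, hb2⟩ := b_facts ha
  set b := Real.sqrt (1 - a ^ 2)
  have h := shafer_arcsin hb0.le hb1
  rw [hba] at h
  rw [sAux, le_div_iff₀ hb0]
  calc 3 / (2 + a) * Real.sqrt (1 - a ^ 2)
      = 3 * Real.sqrt (1 - a ^ 2) / (2 + a) := by ring
    _ ≤ arcsin (Real.sqrt (1 - a ^ 2)) := h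

lemma sAux_ge_one (ha : a ∈ Ioo (0:ℝ) 1) : 1 ≤ sAux a := by
  have h := sAux_lb_shafer ha
  have h2 : (0:ℝ) < 2 + a := by linarith [ha.1]
  have : (1:ℝ) ≤ 3 / (2 + a) := by
    rw [le_div_iff₀ h2]; linarith [ha.2]
  linarith

lemma sAux_lb_pade (ha : a ∈ Ioo (0:ℝ) 1) :
    (1379 + 1202 * a ^ 2 - 61 * a ^ 4) / (1020 + 1500 * a ^ 2) ≤ sAux a := by
  obtain ⟨hb0, hb1, hba, hb2⟩ := b_facts ha
  set b := Real.sqrt (1 - a ^ 2)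
  have h := pade_arcsin hb0.le hb1
  have e1 : (2520 * b - 1080 * b ^ 3 - 61 * b ^ 5) / (2520 - 1500 * b ^ 2)
      = b * ((1379 + 1202 * a ^ 2 - 61 * a ^ 4) / (1020 + 1500 * a ^ 2)) := by
    have e2 : 2520 * b - 1080 * b ^ 3 - 61 * b ^ 5
        = b * (1379 + 1202 * a ^ 2 - 61 * a ^ 4) := by
      have : b ^ 3 = b * b ^ 2 := by ring
      have h5 : b ^ 5 = b * (b ^ 2) ^ 2 := by ring
      rw [this, h5, hb2]; ring
    have e3 : 2520 - 1500 * b ^ 2 = 1020 + 1500 * a ^ 2 := by rw [hb2]; ring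
    rw [e2, e3, mul_div_assoc]
  rw [e1] at h
  rw [sAux, le_div_iff₀ hb0]
  calc (1379 + 1202 * a ^ 2 - 61 * a ^ 4) / (1020 + 1500 * a ^ 2) * b
      = b * ((1379 + 1202 * a ^ 2 - 61 * a ^ 4) / (1020 + 1500 * a ^ 2)) := by ring
    _ ≤ arcsin b := h
end basic

/-- The key gap inequality. -/
lemma gap_lemma {a : ℝ} (ha : a ∈ Ioo (0:ℝ) 1) :
    14 * a + 4 * a ^ 3 + 6 * sAux a < 3 * (a + sAux a) ^ 3 := by
  obtain ⟨ha0, ha1⟩ := ha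
  set s := sAux a with hs
  have hs1 : 1 ≤ s := sAux_ge_one ⟨ha0, ha1⟩
  -- monotone-in-s step
  have mono : ∀ s0 : ℝ, 1 ≤ a + s0 → s0 ≤ s →
      14 * a + 4 * a ^ 3 + 6 * s0 < 3 * (a + s0) ^ 3 →
      14 * a + 4 * a ^ 3 + 6 * s < 3 * (a + s) ^ 3 := by
    intro s0 h1 hss hbase
    have h2 : 1 ≤ a + s := by linarith
    nlinarith [mul_nonneg (sub_nonneg.2 hss)
      (show (0:ℝ) ≤ (a + s) ^ 2 + (a + s) * (a + s0) + (a + s0) ^ 2 - 2 by nlinarith)]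
  rcases le_or_gt a (1/2) with hhalf | hhalf
  · -- Shafer region
    apply mono (3 / (2 + a))
    · rw [← sub_nonneg]
      have : a + 3 / (2 + a) - 1 = (1 + a + a ^ 2) / (2 + a) := by field_simp; ring
      rw [this]; positivity
    · exact sAux_lb_shafer ⟨ha0, ha1⟩
    · have hd : (0:ℝ) < 2 + a := by linarith
      have key : 3 * (a + 3 / (2 + a)) ^ 3 - (14 * a + 4 * a ^ 3 + 6 * (3 / (2 + a)))
          = (9 - 22 * a + 3 * a ^ 2 + 16 * a ^ 3 + a ^ 4 - 6 * a ^ 5 - a ^ 6) / (2 + a) ^ 3 := by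
        field_simp; ring
      have hpos : 0 < 9 - 22 * a + 3 * a ^ 2 + 16 * a ^ 3 + a ^ 4 - 6 * a ^ 5 - a ^ 6 := by
        nlinarith [sq_nonneg a, sq_nonneg (a - 1/2), mul_nonneg ha0.le (sq_nonneg a),
          mul_nonneg (mul_nonneg ha0.le ha0.le) (sq_nonneg a),
          mul_nonneg (sub_nonneg.2 hhalf) (sq_nonneg a),
          mul_nonneg (mul_nonneg (sub_nonneg.2 hhalf) ha0.le) (sq_nonneg a),
          mul_nonneg (mul_nonneg (sub_nonneg.2 hhalf) (sub_nonneg.2 hhalf)) (sq_nonneg a),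
          pow_nonneg ha0.le 4, pow_nonneg ha0.le 6]
      linarith [key, div_pos hpos (show (0:ℝ) < (2 + a) ^ 3 by positivity)]
  · -- Padé region
    apply mono ((1379 + 1202 * a ^ 2 - 61 * a ^ 4) / (1020 + 1500 * a ^ 2))
    · rw [← sub_nonneg]
      have hdp : (0:ℝ) < 1020 + 1500 * a ^ 2 := by positivity
      have : a + (1379 + 1202 * a ^ 2 - 61 * a ^ 4) / (1020 + 1500 * a ^ 2) - 1
          = (359 + 1020 * a + 1202 * a ^ 2 + 1500 * a ^ 3 - 1500 * a ^ 2 - 61 * a ^ 4)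
            / (1020 + 1500 * a ^ 2) := by field_simp; ring
      rw [this]
      apply div_nonneg _ hdp.le
      nlinarith [sq_nonneg a, sq_nonneg (a ^ 2), pow_nonneg ha0.le 3, ha1.le]
    · exact sAux_lb_pade ⟨ha0, ha1⟩
    · have hdp : (0:ℝ) < 1020 + 1500 * a ^ 2 := by positivity
      have key : 3 * (a + (1379 + 1202 * a ^ 2 - 61 * a ^ 4) / (1020 + 1500 * a ^ 2)) ^ 3
          - (14 * a + 4 * a ^ 3 + 6 * ((1379 + 1202 * a ^ 2 - 61 * a ^ 4) / (1020 + 1500 * a ^ 2)))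
          = (1 - a) ^ 3 * (-741180783 + 376610031 * a + 4015924380 * a ^ 2
              - 324727356 * a ^ 3 + 13170389958 * a ^ 4 - 97581798 * a ^ 5
              + 8610932316 * a ^ 6 + 1048381380 * a ^ 7 - 48190671 * a ^ 8 + 680943 * a ^ 9)
            / (1020 + 1500 * a ^ 2) ^ 3 := by
        field_simp; ring
      have hQ : 0 < -741180783 + 376610031 * a + 4015924380 * a ^ 2
          - 324727356 * a ^ 3 + 13170389958 * a ^ 4 - 97581798 * a ^ 5
          + 8610932316 * a ^ 6 + 1048381380 * a ^ 7 - 48190671 * a ^ 8 + 680943 * a ^ 9 := by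
        have h2 : 1/4 ≤ a ^ 2 := by nlinarith
        have h3 : a ^ 3 ≤ a ^ 2 := pow_le_pow_of_le_one ha0.le ha1.le (by norm_num)
        have h5 : a ^ 5 ≤ a ^ 4 := pow_le_pow_of_le_one ha0.le ha1.le (by norm_num)
        have h8 : a ^ 8 ≤ a ^ 6 := pow_le_pow_of_le_one ha0.le ha1.le (by norm_num)
        have h7 : (0:ℝ) ≤ a ^ 7 := pow_nonneg ha0.le 7
        have h9 : (0:ℝ) ≤ a ^ 9 := pow_nonneg ha0.le 9
        have h4 : (0:ℝ) ≤ a ^ 4 := pow_nonneg ha0.le 4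
        have h6 : (0:ℝ) ≤ a ^ 6 := pow_nonneg ha0.le 6
        linarith
      have h1a : (0:ℝ) < (1 - a) ^ 3 := pow_pos (by linarith) 3
      linarith [key, div_pos (mul_pos h1a hQ)
        (show (0:ℝ) < (1020 + 1500 * a ^ 2) ^ 3 by positivity)]

/-- arctan x ≤ x for 0 ≤ x -/
lemma arctan_le_self' {x : ℝ} (hx : 0 ≤ x) : arctan x ≤ x := by
  rcases eq_or_lt_of_le hx with h | h
  · simp [← h]
  · have h1 : 0 < arctan x := by
      have := Real.arctan_strictMono h
      rwa [Real.arctan_zero] at this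
    have h2 : arctan x < π / 2 := Real.arctan_lt_pi_div_two x
    have := Real.lt_tan h1 h2
    rw [Real.tan_arctan] at this
    linarith

lemma sAux_le_inv {a : ℝ} (ha : a ∈ Ioo (0:ℝ) 1) : sAux a ≤ 1 / a := by
  obtain ⟨hb0, hb1, hba, hb2⟩ := b_facts ha
  set b := Real.sqrt (1 - a ^ 2)
  have harc : arcsin b = arctan (b / Real.sqrt (1 - b ^ 2)) :=
    Real.arcsin_eq_arctan ⟨by linarith, hb1⟩
  rw [hba] at harc
  have h := arctan_le_self' (show 0 ≤ b / a from div_nonneg hb0.le ha.1.le)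
  rw [← harc] at h
  rw [sAux, div_le_div_iff₀ hb0 ha.1]
  calc arcsin b * a ≤ b / a * a := by exact mul_le_mul_of_nonneg_right h ha.1.le
    _ = 1 * b := by rw [one_mul, div_mul_cancel₀ _ ha.1.ne']

lemma sAux_contOn : ContinuousOn sAux (Ioo (0:ℝ) 1) := by
  have hsq : Continuous (fun a : ℝ => Real.sqrt (1 - a ^ 2)) :=
    (continuous_const.sub (continuous_pow 2)).sqrt
  apply ContinuousOn.div
  · exact (Real.continuous_arcsin.comp hsq).continuousOn
  · exact hsq.continuousOn
  · intro a ha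
    exact (b_facts ha).1.ne'

lemma isoRatio_contOn : ContinuousOn isoRatio (Ioo (0:ℝ) 1) := by
  apply ContinuousOn.div
  · exact (continuous_const.mul continuous_id).continuousOn
  · exact ((continuousOn_id.add sAux_contOn).pow 3)
  · intro a ha
    have h1 := sAux_ge_one ha
    have hp : (0:ℝ) < a + sAux a := by linarith [ha.1]
    exact (pow_pos hp 3).ne'

lemma isoRatio_le (a : ℝ) (ha : a ∈ Ioo (0:ℝ) 1) : isoRatio a ≤ 8 * a := by
  rw [isoRatio]
  apply div_le_self (by linarith [ha.1] : (0:ℝ) ≤ 8 * a)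
  have h1 := sAux_ge_one ha
  have : (1:ℝ) ≤ a + sAux a := by linarith [ha.1]
  calc (1:ℝ) = 1 ^ 3 := by norm_num
    _ ≤ (a + sAux a) ^ 3 := by apply pow_le_pow_left₀ (by norm_num) this

lemma isoRatio_ge (a : ℝ) (ha : a ∈ Ioo (0:ℝ) 1) :
    8 * a ^ 4 / (1 + a ^ 2) ^ 3 ≤ isoRatio a := by
  have ha0 := ha.1
  have hs1 := sAux_ge_one ha
  have hsu := sAux_le_inv ha
  have h1 : 0 < a + sAux a := by linarith
  have h2 : a + sAux a ≤ a + 1 / a := by linarith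
  have h3 : (a + sAux a) ^ 3 ≤ (a + 1 / a) ^ 3 := pow_le_pow_left₀ h1.le h2 3
  have h4 : (0:ℝ) < (a + sAux a) ^ 3 := by positivity
  have h5 : (0:ℝ) < (a + 1 / a) ^ 3 := by positivity
  have e : 8 * a / (a + 1 / a) ^ 3 = 8 * a ^ 4 / (1 + a ^ 2) ^ 3 := by
    rw [div_eq_div_iff h5.ne' (by positivity : ((1:ℝ) + a ^ 2) ^ 3 ≠ 0)]
    field_simp
    ring
  rw [isoRatio, ← e]
  apply div_le_div_of_nonneg_left (by linarith : (0:ℝ) ≤ 8 * a) h4 h3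

theorem exists_spheroid_below_threshold :
    ∀ σ ∈ Set.Ioo (0 : ℝ) 1, ∃ a ∈ Set.Ioo (0 : ℝ) 1,
      isoRatio a = σ ∧ willmoreEnergy a < 4 * π / σ := by
  intro σ hσ
  obtain ⟨hσ0, hσ1⟩ := hσ
  -- find a₁ close to 1 with σ < isoRatio a₁
  have hφc : ContinuousAt (fun a : ℝ => 8 * a ^ 4 / (1 + a ^ 2) ^ 3) 1 := by
    apply ContinuousAt.div
    · fun_prop
    · fun_prop
    · norm_num
  have hφ1 : (fun a : ℝ => 8 * a ^ 4 / (1 + a ^ 2) ^ 3) 1 = 1 := by norm_num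
  have htend : Tendsto (fun a : ℝ => 8 * a ^ 4 / (1 + a ^ 2) ^ 3) (𝓝[<] 1) (𝓝 1) := by
    have := hφc.continuousWithinAt (s := Iio (1:ℝ))
    rw [ContinuousWithinAt] at this
    rwa [show (8:ℝ) * 1 ^ 4 / (1 + 1 ^ 2) ^ 3 = 1 by norm_num] at this
  have hev : ∀ᶠ a in 𝓝[<] (1:ℝ), σ < 8 * a ^ 4 / (1 + a ^ 2) ^ 3 :=
    htend.eventually (eventually_gt_nhds hσ1)
  have hev2 : ∀ᶠ a in 𝓝[<] (1:ℝ), a ∈ Ioo (1/2 : ℝ) 1 :=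
    Ioo_mem_nhdsLT_of_mem (by constructor <;> norm_num)
  obtain ⟨a₁, ha₁φ, ha₁m⟩ := (hev.and hev2).exists
  have ha₁ : a₁ ∈ Ioo (0:ℝ) 1 := ⟨by linarith [ha₁m.1], ha₁m.2⟩
  have ha₁σ : σ < isoRatio a₁ := lt_of_lt_of_le ha₁φ (isoRatio_ge a₁ ha₁)
  -- a₀
  set a₀ : ℝ := σ / 9 with ha₀def
  have ha₀ : a₀ ∈ Ioo (0:ℝ) 1 := ⟨by positivity, by linarith⟩
  have ha₀σ : isoRatio a₀ < σ := lt_of_le_of_lt (isoRatio_le a₀ ha₀) (by linarith)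
  have ha₀₁ : a₀ ≤ a₁ := by
    have : a₀ < 1/2 := by rw [ha₀def]; linarith
    linarith [ha₁m.1]
  -- IVT
  have hsub : Icc a₀ a₁ ⊆ Ioo (0:ℝ) 1 := fun x hx => ⟨lt_of_lt_of_le ha₀.1 hx.1,
    lt_of_le_of_lt hx.2 ha₁.2⟩
  have hIVT := intermediate_value_Icc ha₀₁ (isoRatio_contOn.mono hsub)
  have hmem : σ ∈ Icc (isoRatio a₀) (isoRatio a₁) := ⟨ha₀σ.le, ha₁σ.le⟩
  obtain ⟨a, haIcc, haEq⟩ := hIVT hmem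
  have haI : a ∈ Ioo (0:ℝ) 1 := hsub haIcc
  refine ⟨a, haI, haEq, ?_⟩
  -- Willmore bound
  have hgap := gap_lemma haI
  have ha0 := haI.1
  have hs1 := sAux_ge_one haI
  set s := sAux a with hsdef
  have hsum : 0 < a + s := by linarith
  have hiso : σ = 8 * a / (a + s) ^ 3 := by rw [← haEq, isoRatio]
  have h4πσ : 4 * π / σ = π * ((a + s) ^ 3 / (2 * a)) := by
    rw [hiso]
    field_simp
    ring
  have hW : willmoreEnergy a = π * (7 / 3 + 2 / 3 * a ^ 2 + s / a) := by
    rw [willmoreEnergy]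
    field_simp
    ring
  rw [h4πσ, hW]
  apply mul_lt_mul_of_pos_left _ Real.pi_pos
  rw [lt_div_iff₀ (by linarith : (0:ℝ) < 2 * a)]
  have e2 : (7 / 3 + 2 / 3 * a ^ 2 + s / a) * (2 * a)
      = (14 * a + 4 * a ^ 3 + 6 * s) / 3 := by
    field_simp
    ring
  rw [e2]
  linarith [hgap]
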